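/- Let F be a family of subsets of a (possibly infinite) set W. Then there exists a linear ordering < of W such that each member of F is an interval under <, if and only if there do not exist distinct v₁, v₂, v₃ ∈ W and F-connected subsets X₁, X₂, X₃ of W such that v_i ∈ X_j if and only if i ≠ j, for all i, j ∈ {1,2,3}. -/

import Mathlib

open Set

universe u

/-- The intersection graph of a family `F` of sets: vertices are the members of `F`,
two distinct members adjacent iff they intersect. -/
def IntGraph {W : Type u} (F : Set (Set W)) : SimpleGraph F where
  Adj S T := S ≠ T ∧ ((S : Set W) ∩ (T : Set W)).Nonempty
  symm := ⟨by
    rintro S T ⟨h1, x, hx1, hx2⟩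
    exact ⟨h1.symm, x, hx2, hx1⟩⟩
  loopless := ⟨by rintro S ⟨h, _⟩; exact h rfl⟩

/-- `G` has an induced cycle of length at least 4. -/
def HasLongInducedCycle {V : Type u} (G : SimpleGraph V) : Prop :=
  ∃ n : ℕ, 4 ≤ n ∧ ∃ f : ZMod n → V, Function.Injective f ∧
    ∀ i j : ZMod n, G.Adj (f i) (f j) ↔ (j = i + 1 ∨ i = j + 1)

/-- A graph is chordal iff it has no induced cycle of length at least 4. -/
def Chordal {V : Type u} (G : SimpleGraph V) : Prop := ¬ HasLongInducedCycle G

/-- The chordal property for a family of sets: its intersection graph is chordal. -/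
def ChordalProp {W : Type u} (F : Set (Set W)) : Prop := Chordal (IntGraph F)

/-- The finite Helly property: every nonempty finite subfamily whose members pairwise
intersect has a common element. -/
def FiniteHelly {W : Type u} (F : Set (Set W)) : Prop :=
  ∀ R : Finset (Set W), R.Nonempty → ↑R ⊆ F →
    (∀ S ∈ R, ∀ T ∈ R, S ≠ T → (S ∩ T).Nonempty) →
    (⋂ S ∈ R, S).Nonempty

/-- A family `F` is well-founded if there is no sequence `(Sᵢ)` of members of `F` with
nonempty total intersection such that no partial intersection `S₀ ∩ ⋯ ∩ Sᵢ` is contained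
in `S_{i+1}`. -/
def WellFoundedFamily {W : Type u} (F : Set (Set W)) : Prop :=
  ¬ ∃ S : ℕ → Set W, (∀ i, S i ∈ F) ∧ (⋂ i, S i).Nonempty ∧
      ∀ i, ¬ (⋂ j ≤ i, S j) ⊆ S (i + 1)

/-- `X` is `F`-connected: for every partition of `X` into two nonempty parts, some
member of `F` included in `X` meets both parts. -/
def FConnected {W : Type u} (F : Set (Set W)) (X : Set W) : Prop :=
  ∀ A B : Set W, A ∪ B = X → A ∩ B = ∅ → A.Nonempty → B.Nonempty →
    ∃ S ∈ F, S ⊆ X ∧ (S ∩ A).Nonempty ∧ (S ∩ B).Nonempty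

/-- A path-decomposition of `G` indexed by `Fin n`: bags cover all vertices and edges,
and for each vertex the set of indices of bags containing it is an interval. -/
def IsPathDecomp {V : Type u} (G : SimpleGraph V) {n : ℕ} (B : Fin n → Finset V) : Prop :=
  (∀ v, ∃ i, v ∈ B i) ∧
  (∀ u v, G.Adj u v → ∃ i, u ∈ B i ∧ v ∈ B i) ∧
  (∀ v : V, ∀ i i' i'' : Fin n, i ≤ i' → i' ≤ i'' → v ∈ B i → v ∈ B i'' → v ∈ B i')

/-- `G` has path-width at most `k`: some path-decomposition has all bags of size ≤ k+1. -/
def PathWidthLE {V : Type u} (G : SimpleGraph V) (k : ℕ) : Prop :=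
  ∃ (n : ℕ) (B : Fin n → Finset V), IsPathDecomp G B ∧ ∀ i, (B i).card ≤ k + 1

/-- `G` has line-width at most `k`: there is a decomposition indexed by a linearly ordered
set, satisfying the path-decomposition axioms, with all bags of size ≤ k+1. -/
def LineWidthLE {V : Type u} (G : SimpleGraph V) (k : ℕ) : Prop :=
  ∃ (L : Type u) (r : L → L → Prop), IsLinearOrder L r ∧
    ∃ B : L → Finset V,
      (∀ v, ∃ i, v ∈ B i) ∧
      (∀ u v, G.Adj u v → ∃ i, u ∈ B i ∧ v ∈ B i) ∧
      (∀ v i i' i'', r i i' → r i' i'' → v ∈ B i → v ∈ B i'' → v ∈ B i') ∧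
      ∀ i, (B i).card ≤ k + 1

namespace S12

variable {W : Type u}

def NoAT (𝒞 : Set (Set W)) : Prop :=
  ¬ ∃ (v₁ v₂ v₃ : W) (X₁ X₂ X₃ : Set W), v₁ ≠ v₂ ∧ v₁ ≠ v₃ ∧ v₂ ≠ v₃ ∧
    X₁ ∈ 𝒞 ∧ X₂ ∈ 𝒞 ∧ X₃ ∈ 𝒞 ∧ v₁ ∉ X₁ ∧ v₁ ∈ X₂ ∧ v₁ ∈ X₃ ∧
    v₂ ∈ X₁ ∧ v₂ ∉ X₂ ∧ v₂ ∈ X₃ ∧ v₃ ∈ X₁ ∧ v₃ ∈ X₂ ∧ v₃ ∉ X₃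

def A2 (𝒞 : Set (Set W)) : Prop :=
  ∀ 𝒮 : Set (Set W), 𝒮 ⊆ 𝒞 → (∃ y, ∀ C ∈ 𝒮, y ∈ C) → ⋃₀ 𝒮 ∈ 𝒞

def IsEnd (𝒞 : Set (Set W)) (x : W) : Prop :=
  ∀ C ∈ 𝒞, ∀ D ∈ 𝒞, x ∈ C → x ∈ D → C ⊆ D ∨ D ⊆ C

def del (𝒞 : Set (Set W)) (u : W) : Set (Set W) := (fun C => C \ {u}) '' 𝒞

lemma noAT_elim {𝒞 : Set (Set W)} (h : NoAT 𝒞) {a b c : W} {XA XB XC : Set W}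
    (hab : a ≠ b) (hac : a ≠ c) (hbc : b ≠ c)
    (hXA : XA ∈ 𝒞) (hXB : XB ∈ 𝒞) (hXC : XC ∈ 𝒞)
    (haA : a ∉ XA) (haB : a ∈ XB) (haC : a ∈ XC)
    (hbA : b ∈ XA) (hbB : b ∉ XB) (hbC : b ∈ XC)
    (hcA : c ∈ XA) (hcB : c ∈ XB) (hcC : c ∉ XC) : False :=
  h ⟨a, b, c, XA, XB, XC, hab, hac, hbc, hXA, hXB, hXC, haA, haB, haC, hbA, hbB, hbC,
    hcA, hcB, hcC⟩

lemma NoAT_mono {𝒞 𝒟 : Set (Set W)} (hsub : 𝒟 ⊆ 𝒞) (h : NoAT 𝒞) : NoAT 𝒟 := by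
  rintro ⟨v₁, v₂, v₃, X₁, X₂, X₃, h1, h2, h3, m1, m2, m3, rest⟩
  exact h ⟨v₁, v₂, v₃, X₁, X₂, X₃, h1, h2, h3, hsub m1, hsub m2, hsub m3, rest⟩

lemma mem_union2 {𝒞 : Set (Set W)} (h2 : A2 𝒞) {C D : Set W} (hC : C ∈ 𝒞) (hD : D ∈ 𝒞)
    {y : W} (hyC : y ∈ C) (hyD : y ∈ D) : C ∪ D ∈ 𝒞 := by
  have h := h2 {C, D} ?_ ⟨y, ?_⟩
  · rwa [Set.sUnion_pair] at h
  · intro X hX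
    rcases hX with rfl | hX
    · exact hC
    · rw [Set.mem_singleton_iff] at hX; subst hX; exact hD
  · intro X hX
    rcases hX with rfl | hX
    · exact hyC
    · rw [Set.mem_singleton_iff] at hX; subst hX; exact hyD

lemma A2_del {𝒞 : Set (Set W)} (h2 : A2 𝒞) (u : W) : A2 (del 𝒞 u) := by
  rintro 𝒮' h𝒮' ⟨y, hy⟩
  refine ⟨⋃₀ {C | C ∈ 𝒞 ∧ y ∈ C ∧ C \ {u} ∈ 𝒮'},
    h2 _ (fun C hC => hC.1) ⟨y, fun C hC => hC.2.1⟩, ?_⟩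
  ext z
  simp only [Set.mem_diff, Set.mem_sUnion, Set.mem_singleton_iff, Set.mem_setOf_eq]
  constructor
  · rintro ⟨⟨C, ⟨hC𝒞, hyC, hCS⟩, hzC⟩, hzu⟩
    exact ⟨C \ {u}, hCS, hzC, hzu⟩
  · rintro ⟨T, hT, hzT⟩
    obtain ⟨C, hC, rfl⟩ := h𝒮' hT
    exact ⟨⟨C, ⟨hC, (hy _ hT).1, hT⟩, hzT.1⟩, hzT.2⟩

lemma NoAT_del {𝒞 : Set (Set W)} (hAT : NoAT 𝒞) (u : W) : NoAT (del 𝒞 u) := by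
  rintro ⟨v₁, v₂, v₃, X₁, X₂, X₃, h12, h13, h23, hX₁, hX₂, hX₃,
    n1, m12, m13, m21, n2, m23, m31, m32, n3⟩
  obtain ⟨C₁, hC₁, rfl⟩ := hX₁
  obtain ⟨C₂, hC₂, rfl⟩ := hX₂
  obtain ⟨C₃, hC₃, rfl⟩ := hX₃
  have h1u : v₁ ≠ u := m12.2
  have h2u : v₂ ≠ u := m21.2
  have h3u : v₃ ≠ u := m31.2
  exact hAT ⟨v₁, v₂, v₃, C₁, C₂, C₃, h12, h13, h23, hC₁, hC₂, hC₃,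
    fun h => n1 ⟨h, h1u⟩, m12.1, m13.1,
    m21.1, fun h => n2 ⟨h, h2u⟩, m23.1,
    m31.1, m32.1, fun h => n3 ⟨h, h3u⟩⟩

lemma not_end_witness {𝒞 : Set (Set W)} {x : W} (h : ¬ IsEnd 𝒞 x) :
    ∃ C, C ∈ 𝒞 ∧ ∃ C', C' ∈ 𝒞 ∧ x ∈ C ∧ x ∈ C' ∧ ¬ C ⊆ C' ∧ ¬ C' ⊆ C := by
  unfold IsEnd at h
  push_neg at h
  obtain ⟨C, hC, C', hC', hx, hx', hor⟩ := h
  exact ⟨C, hC, C', hC', hx, hx', hor.1, hor.2⟩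

lemma bet_mid {𝒞 : Set (Set W)} (hAT : NoAT 𝒞) {u : W} {Da Db : Set W}
    (hDa : Da ∈ 𝒞) (hDb : Db ∈ 𝒞) {da db : W}
    (hu : u ∈ Da) (hu' : u ∈ Db) (hda : da ∈ Da) (hdaB : da ∉ Db)
    (hdb : db ∈ Db) (hdbA : db ∉ Da) :
    ∀ G ∈ 𝒞, da ∈ G → db ∈ G → u ∈ G := by
  intro G hG h1 h2'
  by_contra huG
  exact noAT_elim hAT (by rintro rfl; exact hdaB hu') (by rintro rfl; exact hdbA hu)
    (by rintro rfl; exact hdaB hdb) hG hDb hDa huG hu' hu h1 hdaB hda h2' hdb hdbA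

section Transfer

variable {𝒞 : Set (Set W)} {x u : W}

lemma transfer_core (h2 : A2 𝒞) (hAT : NoAT 𝒞) (hxu : x ≠ u)
    (hq : IsEnd (del 𝒞 u) x)
    {C C' D D' : Set W}
    (hC : C ∈ 𝒞) (hC' : C' ∈ 𝒞) (hxC : x ∈ C) (hxC' : x ∈ C')
    (hCC' : ¬ C ⊆ C') (hC'C : ¬ C' ⊆ C)
    (hD : D ∈ 𝒞) (hD' : D' ∈ 𝒞) (huD : u ∈ D) (huD' : u ∈ D')
    (hDD' : ¬ D ⊆ D') (hD'D : ¬ D' ⊆ D)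
    (hsub : C \ {u} ⊆ C' \ {u}) : False := by
  -- u ∈ C, u ∉ C'
  obtain ⟨z, hzC, hzC'⟩ := Set.not_subset.mp hCC'
  have hzu : z = u := by
    by_contra hz
    exact hzC' (hsub ⟨hzC, hz⟩).1
  subst hzu
  have huC : z ∈ C := hzC
  have huC' : z ∉ C' := hzC'
  -- rename: u := z
  -- w
  obtain ⟨w, hwC', hwC⟩ := Set.not_subset.mp hC'C
  have hwu : w ≠ z := fun h => huC' (h ▸ hwC')
  -- d, d'
  obtain ⟨d, hdD, hdD'⟩ := Set.not_subset.mp hDD'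
  obtain ⟨d', hd'D', hd'D⟩ := Set.not_subset.mp hD'D
  have hdu : d ≠ z := fun h => hdD' (h ▸ huD')
  have hd'u : d' ≠ z := fun h => hd'D (h ▸ huD)
  have hxw : x ≠ w := fun h => hwC (h ▸ hxC)
  -- B1 : every member containing u and w contains x
  have B1 : ∀ G ∈ 𝒞, z ∈ G → w ∈ G → x ∈ G := by
    intro G hG h1 h2'
    by_contra hxG
    exact noAT_elim hAT hxu hxw (by rintro rfl; exact huC' hwC')
      hG hC' hC hxG hxC' hxC h1 huC' huC h2' hwC' hwC
  -- B2 : every member containing d and d' contains u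
  have B2 : ∀ G ∈ 𝒞, d ∈ G → d' ∈ G → z ∈ G :=
    bet_mid hAT hD hD' huD huD' hdD hdD' hd'D' hd'D
  -- inner helper
  have inner : ∀ (Da Db : Set W), Da ∈ 𝒞 → Db ∈ 𝒞 → z ∈ Da → z ∈ Db →
      ∀ da db, da ∈ Da → da ∉ Db → db ∈ Db → db ∉ Da →
      Da \ {z} ⊆ C' \ {z} → w ∈ Db → False := by
    intro Da Db hDa hDb hzDa hzDb da db hda hdaB hdb hdbA hDasub hwDb
    have hxDb : x ∈ Db := B1 Db hDb hzDb hwDb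
    have B2' : ∀ G ∈ 𝒞, da ∈ G → db ∈ G → z ∈ G :=
      bet_mid hAT hDa hDb hzDa hzDb hda hdaB hdb hdbA
    have hdaz : da ≠ z := fun h => hdaB (h ▸ hzDb)
    have hdbz : db ≠ z := fun h => hdbA (h ▸ hzDa)
    have hdaC' : da ∈ C' := (hDasub ⟨hda, hdaz⟩).1
    have hcmp2 := hq _ ⟨C, hC, rfl⟩ _ ⟨Db, hDb, rfl⟩ ⟨hxC, hxu⟩ ⟨hxDb, hxu⟩
    rcases hcmp2 with hA | hB
    · -- C\{z} ⊆ Db\{z}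
      have hcmp3 := hq _ ⟨C', hC', rfl⟩ _ ⟨Db, hDb, rfl⟩ ⟨hxC', hxu⟩ ⟨hxDb, hxu⟩
      rcases hcmp3 with hB1' | hB2'
      · -- C'\{z} ⊆ Db\{z} : da ∈ Db, contradiction
        exact hdaB ((hB1' (hDasub ⟨hda, hdaz⟩)).1)
      · -- Db\{z} ⊆ C'\{z} : db ∈ C'
        have hdbC' : db ∈ C' := (hB2' ⟨hdb, hdbz⟩).1
        exact huC' (B2' C' hC' hdaC' hdbC')
    · -- Db\{z} ⊆ C\{z}
      have hdbC : db ∈ C := (hB ⟨hdb, hdbz⟩).1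
      have hdbC' : db ∈ C' := (hsub ⟨hdbC, hdbz⟩).1
      exact huC' (B2' C' hC' hdaC' hdbC')
  -- compare C ∪ D with C'
  have hCD : C ∪ D ∈ 𝒞 := mem_union2 h2 hC hD huC huD
  have hCD' : C ∪ D' ∈ 𝒞 := mem_union2 h2 hC hD' huC huD'
  have hc1 := hq _ ⟨C ∪ D, hCD, rfl⟩ _ ⟨C', hC', rfl⟩ ⟨Or.inl hxC, hxu⟩ ⟨hxC', hxu⟩
  have hc2 := hq _ ⟨C ∪ D', hCD', rfl⟩ _ ⟨C', hC', rfl⟩ ⟨Or.inl hxC, hxu⟩ ⟨hxC', hxu⟩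
  rcases hc1 with hi | hii
  · rcases hc2 with hi' | hii'
    · -- d ∈ C', d' ∈ C'
      have hdC' : d ∈ C' := (hi ⟨Or.inr hdD, hdu⟩).1
      have hd'C' : d' ∈ C' := (hi' ⟨Or.inr hd'D', hd'u⟩).1
      exact huC' (B2 C' hC' hdC' hd'C')
    · -- case (i, ii') : d ∈ C', w ∈ D'
      have hwD' : w ∈ D' := by
        have := (hii' ⟨hwC', hwu⟩).1
        rcases this with h | h
        · exact absurd h hwC
        · exact h
      exact inner D D' hD hD' huD huD' d d' hdD hdD' hd'D' hd'D
        (fun t ht => hi ⟨Or.inr ht.1, ht.2⟩) hwD'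
  · rcases hc2 with hi' | hii'
    · -- case (ii, i') : w ∈ D, d' ∈ C'
      have hwD : w ∈ D := by
        have := (hii ⟨hwC', hwu⟩).1
        rcases this with h | h
        · exact absurd h hwC
        · exact h
      exact inner D' D hD' hD huD' huD d' d hd'D' hd'D hdD hdD'
        (fun t ht => hi' ⟨Or.inr ht.1, ht.2⟩) hwD
    · -- both (ii, ii')
      have hwD : w ∈ D := by
        have := (hii ⟨hwC', hwu⟩).1
        rcases this with h | h
        · exact absurd h hwC
        · exact h
      have hwD' : w ∈ D' := by
        have := (hii' ⟨hwC', hwu⟩).1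
        rcases this with h | h
        · exact absurd h hwC
        · exact h
      have hxD : x ∈ D := B1 D hD huD hwD
      have hxD' : x ∈ D' := B1 D' hD' huD' hwD'
      have hcmp := hq _ ⟨D, hD, rfl⟩ _ ⟨D', hD', rfl⟩ ⟨hxD, hxu⟩ ⟨hxD', hxu⟩
      rcases hcmp with h | h
      · exact hdD' (h ⟨hdD, hdu⟩).1
      · exact hd'D (h ⟨hd'D', hd'u⟩).1

lemma transfer (h2 : A2 𝒞) (hAT : NoAT 𝒞) (hxu : x ≠ u)
    (hq : IsEnd (del 𝒞 u) x) : IsEnd 𝒞 x ∨ IsEnd 𝒞 u := by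
  by_contra hcon
  push_neg at hcon
  obtain ⟨hx, hu⟩ := hcon
  obtain ⟨C, hC, C', hC', hxC, hxC', hCC', hC'C⟩ := not_end_witness hx
  obtain ⟨D, hD, D', hD', huD, huD', hDD', hD'D⟩ := not_end_witness hu
  have hcmp := hq _ ⟨C, hC, rfl⟩ _ ⟨C', hC', rfl⟩ ⟨hxC, hxu⟩ ⟨hxC', hxu⟩
  rcases hcmp with h | h
  · exact transfer_core h2 hAT hxu hq hC hC' hxC hxC' hCC' hC'C hD hD' huD huD' hDD' hD'D h
  · exact transfer_core h2 hAT hxu hq hC' hC hxC' hxC hC'C hCC' hD hD' huD huD' hDD' hD'D h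

end Transfer

lemma core [DecidableEq W] :
    ∀ (V : Finset W) (𝒞 : Set (Set W)), (∀ C ∈ 𝒞, C ⊆ (V : Set W)) → A2 𝒞 → NoAT 𝒞 →
      V.Nonempty → ∃ x ∈ V, IsEnd 𝒞 x := by
  intro V
  induction V using Finset.strongInduction with
  | _ V ih =>
    intro 𝒞 hsub h2 hAT hne
    obtain ⟨u, hu⟩ := hne
    by_cases h1 : (V.erase u).Nonempty
    · have hsub' : ∀ C ∈ del 𝒞 u, C ⊆ ((V.erase u : Finset W) : Set W) := by
        rintro T ⟨C, hC, rfl⟩ z hz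
        rw [Finset.coe_erase]
        exact ⟨hsub C hC hz.1, hz.2⟩
      obtain ⟨x, hxV, hxE⟩ := ih (V.erase u) (Finset.erase_ssubset hu) (del 𝒞 u)
        hsub' (A2_del h2 u) (NoAT_del hAT u) h1
      have hxu : x ≠ u := Finset.ne_of_mem_erase hxV
      rcases transfer h2 hAT hxu hxE with h | h
      · exact ⟨x, Finset.mem_of_mem_erase hxV, h⟩
      · exact ⟨u, hu, h⟩
    · refine ⟨u, hu, ?_⟩
      intro C hC D hD huC huD
      have hV : V = {u} := by
        rcases (Finset.erase_eq_empty_iff V u).mp (Finset.not_nonempty_iff_eq_empty.mp h1) with h | h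
        · exact absurd h (Finset.nonempty_iff_ne_empty.mp ⟨u, hu⟩)
        · exact h
      left
      intro z hz
      have : z = u := by
        have := hsub C hC hz
        rw [hV] at this
        simpa using this
      rw [this]; exact huD

lemma FL [DecidableEq W] :
    ∀ V : Finset W, ∀ (𝒞 : Set (Set W)) (P D₀ : Set W),
      (∀ C ∈ 𝒞, C ⊆ (V : Set W)) → A2 𝒞 → NoAT 𝒞 →
      (∀ D ∈ 𝒞, ∀ D' ∈ 𝒞, (D ∩ P).Nonempty → (D \ P).Nonempty →
        (D' ∩ P).Nonempty → (D' \ P).Nonempty → D \ P ⊆ D' \ P ∨ D' \ P ⊆ D \ P) →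
      D₀ ∈ 𝒞 → (D₀ ∩ P).Nonempty → (D₀ \ P).Nonempty →
      (∀ D ∈ 𝒞, (D ∩ P).Nonempty → (D \ P).Nonempty → D₀ \ P ⊆ D \ P) →
      ∃ x ∈ D₀ \ P,
        (∀ C ∈ 𝒞, ∀ C' ∈ 𝒞, x ∈ C → x ∈ C' → C ⊆ D₀ \ P → C' ⊆ D₀ \ P → C ⊆ C' ∨ C' ⊆ C) ∧
        (∀ C ∈ 𝒞, x ∈ C → C ∩ P = ∅ → ¬ C ⊆ D₀ \ P → D₀ \ P ⊆ C) := by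
  intro V
  induction V using Finset.strongInduction with
  | _ V ih =>
    intro 𝒞 P D₀ hsub h2 hAT hInv hD₀ hD₀P hMne hmin
    set M : Set W := D₀ \ P with hM
    have hMP : ∀ z ∈ M, z ∉ P := fun z hz => hz.2
    -- recursion helper
    have hrec : ∀ v, v ∈ M → ((D₀ \ {v}) \ P).Nonempty →
        ∃ z ∈ (D₀ \ {v}) \ P,
          (∀ C ∈ del 𝒞 v, ∀ C' ∈ del 𝒞 v, z ∈ C → z ∈ C' →
            C ⊆ (D₀ \ {v}) \ P → C' ⊆ (D₀ \ {v}) \ P → C ⊆ C' ∨ C' ⊆ C) ∧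
          (∀ C ∈ del 𝒞 v, z ∈ C → C ∩ P = ∅ → ¬ C ⊆ (D₀ \ {v}) \ P →
            (D₀ \ {v}) \ P ⊆ C) := by
      intro v hvM hne'
      have hvV : v ∈ V := hsub D₀ hD₀ hvM.1
      have hvP : v ∉ P := hvM.2
      have e1 : ∀ D : Set W, (D \ {v}) ∩ P = D ∩ P := by
        intro D
        ext z
        simp only [Set.mem_inter_iff, Set.mem_diff, Set.mem_singleton_iff]
        constructor
        · exact fun h => ⟨h.1.1, h.2⟩
        · rintro ⟨h1, h2⟩
          exact ⟨⟨h1, fun hz => hvP (hz ▸ h2)⟩, h2⟩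
      have e2 : ∀ D : Set W, (D \ {v}) \ P = (D \ P) \ {v} := fun D => Set.diff_diff_comm
      apply ih (V.erase v) (Finset.erase_ssubset hvV) (del 𝒞 v) P (D₀ \ {v})
      · rintro T ⟨C, hC, rfl⟩ z hz
        rw [Finset.coe_erase]
        exact ⟨hsub C hC hz.1, hz.2⟩
      · exact A2_del h2 v
      · exact NoAT_del hAT v
      · rintro _ ⟨D, hD, rfl⟩ _ ⟨D', hD', rfl⟩ h1 h2' h3 h4
        rw [e1] at h1 h3
        rw [e2] at h2' h4 ⊢
        rw [e2]
        have h2'' : (D \ P).Nonempty := h2'.mono Set.diff_subset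
        have h4' : (D' \ P).Nonempty := h4.mono Set.diff_subset
        rcases hInv D hD D' hD' h1 h2'' h3 h4' with h | h
        · exact Or.inl (Set.diff_subset_diff_left h)
        · exact Or.inr (Set.diff_subset_diff_left h)
      · exact ⟨D₀, hD₀, rfl⟩
      · rw [e1]; exact hD₀P
      · exact hne'
      · rintro _ ⟨D, hD, rfl⟩ h1 h2'
        rw [e1] at h1
        rw [e2] at h2' ⊢
        rw [e2]
        exact Set.diff_subset_diff_left
          (hmin D hD h1 (h2'.mono Set.diff_subset))
    -- trace chain lemma
    have tchain : ∀ C ∈ 𝒞, C ∩ P = ∅ → ¬ C ⊆ M → ∀ C' ∈ 𝒞, C' ∩ P = ∅ → ¬ C' ⊆ M →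
        (C ∩ M ⊆ C' ∩ M ∨ C' ∩ M ⊆ C ∩ M) := by
      intro C hC hCP hCM C' hC' hC'P hC'M
      by_contra hnn
      push_neg at hnn
      obtain ⟨e, heCM, heC'M⟩ := Set.not_subset.mp hnn.1
      obtain ⟨e', he'C'M, he'CM⟩ := Set.not_subset.mp hnn.2
      have heC' : e ∉ C' := fun h => heC'M ⟨h, heCM.2⟩
      have he'C : e' ∉ C := fun h => he'CM ⟨h, he'C'M.2⟩
      have heD₀ : e ∈ D₀ := heCM.2.1
      have he'D₀ : e' ∈ D₀ := he'C'M.2.1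
      have hCnP : ∀ z ∈ C, z ∉ P := fun z hz hzP =>
        (Set.eq_empty_iff_forall_notMem.mp hCP z) ⟨hz, hzP⟩
      have hC'nP : ∀ z ∈ C', z ∉ P := fun z hz hzP =>
        (Set.eq_empty_iff_forall_notMem.mp hC'P z) ⟨hz, hzP⟩
      have hQ : ∀ E : Set W, (∀ z ∈ E, z ∉ P) → (E ∪ D₀) \ P = E ∪ M := by
        intro E hEP
        ext z
        simp only [Set.mem_diff, Set.mem_union, hM]
        constructor
        · rintro ⟨hz | hz, hzP⟩
          · exact Or.inl hz
          · exact Or.inr ⟨hz, hzP⟩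
        · rintro (hz | hz)
          · exact ⟨Or.inl hz, hEP z hz⟩
          · exact ⟨Or.inr hz.1, hz.2⟩
      have hU : C ∪ D₀ ∈ 𝒞 := mem_union2 h2 hC hD₀ heCM.1 heD₀
      have hU' : C' ∪ D₀ ∈ 𝒞 := mem_union2 h2 hC' hD₀ he'C'M.1 he'D₀
      obtain ⟨p, hpD₀, hpP⟩ := hD₀P
      have hUP : ((C ∪ D₀) ∩ P).Nonempty := ⟨p, Or.inr hpD₀, hpP⟩
      have hU'P : ((C' ∪ D₀) ∩ P).Nonempty := ⟨p, Or.inr hpD₀, hpP⟩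
      have hUQ : (C ∪ D₀) \ P = C ∪ M := hQ C hCnP
      have hU'Q : (C' ∪ D₀) \ P = C' ∪ M := hQ C' hC'nP
      have hUne : ((C ∪ D₀) \ P).Nonempty := by rw [hUQ]; exact ⟨e, Or.inl heCM.1⟩
      have hU'ne : ((C' ∪ D₀) \ P).Nonempty := by rw [hU'Q]; exact ⟨e', Or.inl he'C'M.1⟩
      have hss := hInv _ hU _ hU' hUP hUne hU'P hU'ne
      rw [hUQ, hU'Q] at hss
      have hABC : ∀ z, z ∈ C → z ∈ C' → z ∉ M → False := by
        intro z hzC hzC' hzM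
        have hzD₀ : z ∉ D₀ := fun h => hzM ⟨h, hCnP z hzC⟩
        exact noAT_elim hAT (a := e) (b := e') (c := z)
          (by rintro rfl; exact heC' he'C'M.1)
          (by rintro rfl; exact hzM heCM.2)
          (by rintro rfl; exact hzM he'C'M.2)
          hC' hC hD₀ heC' heCM.1 heD₀ he'C'M.1 he'C he'D₀ hzC' hzC hzD₀
      rcases hss with h | h
      · obtain ⟨z, hzC, hzM⟩ := Set.not_subset.mp hCM
        rcases h (Or.inl hzC) with h' | h'
        · exact hABC z hzC h' hzM
        · exact hzM h'
      · obtain ⟨z, hzC', hzM⟩ := Set.not_subset.mp hC'M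
        rcases h (Or.inl hzC') with h' | h'
        · exact hABC z h' hzC' hzM
        · exact hzM h'
    -- the bad set B
    set B : Set W := {a | a ∈ M ∧ ∃ C, C ∈ 𝒞 ∧ a ∈ C ∧ C ∩ P = ∅ ∧ ¬ C ⊆ M ∧ ¬ M ⊆ C}
      with hB
    have crossfree : ∀ z, z ∈ M → z ∉ B → ∀ C ∈ 𝒞, z ∈ C → C ∩ P = ∅ → ¬ C ⊆ M → M ⊆ C := by
      intro z hzM hzB C hC hzC hCP hCM
      by_contra hMC
      exact hzB ⟨hzM, C, hC, hzC, hCP, hCM, hMC⟩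
    have hBrep : B.Nonempty → ∃ Cs, Cs ∈ 𝒞 ∧ Cs ∩ P = ∅ ∧ ¬ Cs ⊆ M ∧ ¬ M ⊆ Cs ∧
        B ⊆ Cs ∧ ∀ a ∈ M, a ∈ Cs → a ∈ B := by
      rintro ⟨b0, hb0⟩
      set 𝒯 : Set (Set W) := {T | ∃ C, C ∈ 𝒞 ∧ C ∩ P = ∅ ∧ ¬ C ⊆ M ∧ ¬ M ⊆ C ∧ T = C ∩ M}
        with h𝒯
      have h𝒯fin : 𝒯.Finite := by
        apply Set.Finite.subset (Set.Finite.finite_subsets V.finite_toSet)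
        rintro T ⟨C, hC, _, _, _, rfl⟩
        exact fun z hz => hsub C hC hz.1
      have h𝒯ne : 𝒯.Nonempty := by
        obtain ⟨_, C, hC, h1', h2', h3', h4'⟩ := hb0
        exact ⟨C ∩ M, C, hC, h2', h3', h4', rfl⟩
      obtain ⟨T, hT, hTmax⟩ := Set.Finite.exists_maximalFor id 𝒯 h𝒯fin h𝒯ne
      obtain ⟨Cs, hCs, hCsP, hCsM, hMCs, rfl⟩ := hT
      refine ⟨Cs, hCs, hCsP, hCsM, hMCs, ?_,
        fun a haM haC => ⟨haM, Cs, hCs, haC, hCsP, hCsM, hMCs⟩⟩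
      rintro a ⟨haM, C, hC, haC, hCP, hCM, hMC⟩
      rcases tchain C hC hCP hCM Cs hCs hCsP hCsM with h | h
      · exact (h ⟨haC, haM⟩).1
      · have hmem : C ∩ M ∈ 𝒯 := ⟨C, hC, hCP, hCM, hMC, rfl⟩
        have heq : Cs ∩ M = C ∩ M := le_antisymm h (hTmax hmem h)
        have : a ∈ Cs ∩ M := by rw [heq]; exact ⟨haC, haM⟩
        exact this.1
    have huex : ∃ z, z ∈ M ∧ z ∉ B := by
      by_cases hBne : B.Nonempty
      · obtain ⟨Cs, _, _, _, hMCs, hBCs, _⟩ := hBrep hBne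
        obtain ⟨z, hzM, hzCs⟩ := Set.not_subset.mp hMCs
        exact ⟨z, hzM, fun hzB => hzCs (hBCs hzB)⟩
      · obtain ⟨z, hz⟩ := hMne
        exact ⟨z, hz, fun h => hBne ⟨z, h⟩⟩
    obtain ⟨uu, huuM, huuB⟩ := huex
    by_cases hca : ∀ m, m ∈ M → m ≠ uu → m ∈ B
    · refine ⟨uu, huuM, ?_, fun C hC h1' h2' h3' => crossfree uu huuM huuB C hC h1' h2' h3'⟩
      intro C hC C' hC' huC huC' hCM hC'M
      by_contra hnn
      push_neg at hnn
      obtain ⟨c, hcC, hcC'⟩ := Set.not_subset.mp hnn.1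
      obtain ⟨c', hc'C', hc'C⟩ := Set.not_subset.mp hnn.2
      have hcM : c ∈ M := hCM hcC
      have hc'M : c' ∈ M := hC'M hc'C'
      have hcu : c ≠ uu := by rintro rfl; exact hcC' huC'
      have hc'u : c' ≠ uu := by rintro rfl; exact hc'C huC
      have hcB : c ∈ B := hca c hcM hcu
      have hc'B : c' ∈ B := hca c' hc'M hc'u
      obtain ⟨Cs, hCs, _, _, _, hBCs, hback⟩ := hBrep ⟨c, hcB⟩
      have huuCs : uu ∉ Cs := fun h => huuB (hback uu huuM h)
      exact noAT_elim hAT (a := c) (b := c') (c := uu)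
        (by rintro rfl; exact hcC' hc'C') hcu hc'u
        hC' hC hCs hcC' hcC (hBCs hcB) hc'C' hc'C (hBCs hc'B) huC' huC huuCs
    · push_neg at hca
      obtain ⟨u₂, hu₂M, hu₂u, hu₂B⟩ := hca
      have htr : ∀ v w, w ∈ M → w ∉ B → w ≠ v → ∀ C ∈ 𝒞, C ∩ P = ∅ → ¬ C ⊆ M → ¬ M ⊆ C →
          ¬ (M \ {v} ⊆ C) := by
        intro v w hwM hwB hwv C hC hCP hCM hMC hsubm
        exact hwB ⟨hwM, C, hC, hsubm ⟨hwM, hwv⟩, hCP, hCM, hMC⟩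
      have hlift : ∀ v w, v ∈ M → w ∈ M → w ∉ B → w ≠ v →
          ∀ z, z ∈ M → z ≠ v →
          (∀ C' ∈ del 𝒞 v, z ∈ C' → C' ∩ P = ∅ → ¬ C' ⊆ (D₀ \ {v}) \ P →
            (D₀ \ {v}) \ P ⊆ C') →
          ∀ C ∈ 𝒞, z ∈ C → C ∩ P = ∅ → ¬ C ⊆ M → M ⊆ C := by
        intro v w hvM hwM hwB hwv z hzM hzv hcr C hC hzC hCP hCM
        have hM'eq : (D₀ \ {v}) \ P = M \ {v} := by rw [Set.diff_diff_comm, hM]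
        have h4 : ¬ (C \ {v}) ⊆ (D₀ \ {v}) \ P := by
          rw [hM'eq]
          obtain ⟨t, htC, htM⟩ := Set.not_subset.mp hCM
          intro hss
          have htv : t ≠ v := by rintro rfl; exact htM hvM
          exact htM (hss ⟨htC, htv⟩).1
        have h3 : (C \ {v}) ∩ P = ∅ := by
          apply Set.eq_empty_iff_forall_notMem.mpr
          intro t ht
          exact (Set.eq_empty_iff_forall_notMem.mp hCP t) ⟨ht.1.1, ht.2⟩
        have h5 := hcr (C \ {v}) ⟨C, hC, rfl⟩ ⟨hzC, hzv⟩ h3 h4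
        rw [hM'eq] at h5
        have hMvC : M \ {v} ⊆ C := fun t ht => (h5 ht).1
        by_cases hvC : v ∈ C
        · intro t htM
          by_cases htv : t = v
          · rw [htv]; exact hvC
          · exact hMvC ⟨htM, htv⟩
        · exact absurd hMvC
            (htr v w hwM hwB hwv C hC hCP hCM (fun hMC' => hvC (hMC' hvM)))
      have hM'u : ((D₀ \ {uu}) \ P).Nonempty := by
        rw [Set.diff_diff_comm]
        exact ⟨u₂, hu₂M, hu₂u⟩
      obtain ⟨x, hxM', hxpure', hxcross'⟩ := hrec uu huuM hM'u
      have hxMu : x ∈ M \ {uu} := by rw [hM]; rwa [Set.diff_diff_comm] at hxM'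
      have hxM : x ∈ M := hxMu.1
      have hxu : x ≠ uu := hxMu.2
      have hxcross : ∀ C ∈ 𝒞, x ∈ C → C ∩ P = ∅ → ¬ C ⊆ M → M ⊆ C :=
        hlift uu u₂ huuM hu₂M hu₂B hu₂u x hxM hxu hxcross'
      by_cases hxp : ∀ C ∈ 𝒞, ∀ C' ∈ 𝒞, x ∈ C → x ∈ C' → C ⊆ M → C' ⊆ M → C ⊆ C' ∨ C' ⊆ C
      · exact ⟨x, hxM, hxp, fun C hC h1' h2' h3' => hxcross C hC h1' h2' h3'⟩
      · have hM'x : ((D₀ \ {x}) \ P).Nonempty := by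
          rw [Set.diff_diff_comm]
          exact ⟨uu, huuM, Ne.symm hxu⟩
        obtain ⟨y, hyM', hypure', hycross'⟩ := hrec x hxM hM'x
        have hyMx : y ∈ M \ {x} := by rw [hM]; rwa [Set.diff_diff_comm] at hyM'
        have hyM : y ∈ M := hyMx.1
        have hyx : y ≠ x := hyMx.2
        have hycross : ∀ C ∈ 𝒞, y ∈ C → C ∩ P = ∅ → ¬ C ⊆ M → M ⊆ C :=
          hlift x uu hxM huuM huuB (Ne.symm hxu) y hyM hyx hycross'
        set PF : Set (Set W) := {C | C ∈ 𝒞 ∧ C ⊆ M} with hPF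
        have h2P : A2 PF := by
          intro 𝒮 hS hyc
          refine ⟨h2 𝒮 (fun C hC => (hS hC).1) hyc, ?_⟩
          exact Set.sUnion_subset fun C hC => (hS hC).2
        have hATP : NoAT PF := NoAT_mono (fun C hC => hC.1) hAT
        have hqP : IsEnd (del PF x) y := by
          rintro _ ⟨C, hCP', rfl⟩ _ ⟨C', hC'P', rfl⟩ hyT hyT'
          apply hypure' (C \ {x}) ⟨C, hCP'.1, rfl⟩ (C' \ {x}) ⟨C', hC'P'.1, rfl⟩ hyT hyT'
          · rw [Set.diff_diff_comm]
            exact Set.diff_subset_diff_left hCP'.2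
          · rw [Set.diff_diff_comm]
            exact Set.diff_subset_diff_left hC'P'.2
        rcases transfer h2P hATP hyx hqP with hend | hend
        · exact ⟨y, hyM, fun C hC C' hC' m1 m2 m3 m4 => hend C ⟨hC, m3⟩ C' ⟨hC', m4⟩ m1 m2,
            hycross⟩
        · exact absurd (fun C hC C' hC' m1 m2 m3 m4 => hend C ⟨hC, m3⟩ C' ⟨hC', m4⟩ m1 m2) hxp

lemma step [DecidableEq W] (V : Finset W) (𝒞 : Set (Set W)) (P : Set W)
    (hsub : ∀ C ∈ 𝒞, C ⊆ (V : Set W)) (h2 : A2 𝒞) (hAT : NoAT 𝒞)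
    (hA1 : ∀ v ∈ (V : Set W), ({v} : Set W) ∈ 𝒞)
    (hV𝒞 : (V : Set W) ∈ 𝒞)
    (hPV : P ⊆ (V : Set W)) (hPne : P.Nonempty) (hQne : ((V : Set W) \ P).Nonempty)
    (hInv : ∀ D ∈ 𝒞, ∀ D' ∈ 𝒞, (D ∩ P).Nonempty → (D \ P).Nonempty →
      (D' ∩ P).Nonempty → (D' \ P).Nonempty → D \ P ⊆ D' \ P ∨ D' \ P ⊆ D \ P) :
    ∃ x ∈ (V : Set W) \ P,
      (∀ D ∈ 𝒞, (D ∩ P).Nonempty → (D \ P).Nonempty → x ∈ D) ∧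
      (∀ D ∈ 𝒞, ∀ D' ∈ 𝒞, (D ∩ (P ∪ {x})).Nonempty → (D \ (P ∪ {x})).Nonempty →
        (D' ∩ (P ∪ {x})).Nonempty → (D' \ (P ∪ {x})).Nonempty →
        D \ (P ∪ {x}) ⊆ D' \ (P ∪ {x}) ∨ D' \ (P ∪ {x}) ⊆ D \ (P ∪ {x})) := by
  -- find the minimal outside
  set 𝒪 : Set (Set W) := {O | ∃ D, D ∈ 𝒞 ∧ (D ∩ P).Nonempty ∧ (D \ P).Nonempty ∧ O = D \ P}
    with h𝒪
  have hV𝒪 : ((V : Set W) \ P) ∈ 𝒪 := by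
    obtain ⟨p, hp⟩ := hPne
    exact ⟨(V : Set W), hV𝒞, ⟨p, hPV hp, hp⟩, hQne, rfl⟩
  have h𝒪fin : 𝒪.Finite := by
    apply Set.Finite.subset (Set.Finite.finite_subsets V.finite_toSet)
    rintro O ⟨D, hD, _, _, rfl⟩
    exact fun z hz => hsub D hD hz.1
  obtain ⟨O₀, hO₀, hO₀min⟩ := Set.Finite.exists_minimalFor id 𝒪 h𝒪fin ⟨_, hV𝒪⟩
  obtain ⟨D₀, hD₀, hD₀P, hD₀Q, rfl⟩ := hO₀
  have hmin : ∀ D ∈ 𝒞, (D ∩ P).Nonempty → (D \ P).Nonempty → D₀ \ P ⊆ D \ P := by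
    intro D hD h1 h2'
    have hD𝒪 : D \ P ∈ 𝒪 := ⟨D, hD, h1, h2', rfl⟩
    rcases hInv D₀ hD₀ D hD hD₀P hD₀Q h1 h2' with h | h
    · exact h
    · have heq := le_antisymm (hO₀min hD𝒪 h) h
      simp only [id] at heq
      rw [← heq]
  obtain ⟨x, hxM, hxpure, hxcross⟩ := FL V 𝒞 P D₀ hsub h2 hAT hInv hD₀ hD₀P hD₀Q hmin
  have hxall : ∀ D ∈ 𝒞, (D ∩ P).Nonempty → (D \ P).Nonempty → x ∈ D :=
    fun D hD h1 h2' => (hmin D hD h1 h2' hxM).1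
  -- crossing-crossing comparability
  have L3 : ∀ E ∈ 𝒞, E ∩ P = ∅ → (D₀ \ P) ⊆ E → ∀ E' ∈ 𝒞, E' ∩ P = ∅ → (D₀ \ P) ⊆ E' →
      E ⊆ E' ∨ E' ⊆ E := by
    intro E hE hEP hME E' hE' hE'P hME'
    by_contra hnn
    push_neg at hnn
    obtain ⟨c, hcE, hcE'⟩ := Set.not_subset.mp hnn.1
    obtain ⟨c', hc'E', hc'E⟩ := Set.not_subset.mp hnn.2
    obtain ⟨p, hpD₀, hpP⟩ := hD₀P
    obtain ⟨m, hm⟩ := hD₀Q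
    have hcP : c ∉ P := fun h => (Set.eq_empty_iff_forall_notMem.mp hEP c) ⟨hcE, h⟩
    have hc'P : c' ∉ P := fun h => (Set.eq_empty_iff_forall_notMem.mp hE'P c') ⟨hc'E', h⟩
    have hcD₀ : c ∉ D₀ := fun h => hcE' (hME' ⟨h, hcP⟩)
    have hc'D₀ : c' ∉ D₀ := fun h => hc'E (hME ⟨h, hc'P⟩)
    have hU1 : E' ∪ D₀ ∈ 𝒞 := mem_union2 h2 hE' hD₀ (hME' hm) hm.1
    have hU2 : E ∪ D₀ ∈ 𝒞 := mem_union2 h2 hE hD₀ (hME hm) hm.1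
    have hU3 : E ∪ E' ∈ 𝒞 := mem_union2 h2 hE hE' (hME hm) (hME' hm)
    refine noAT_elim hAT (a := c) (b := c') (c := p)
      (by rintro rfl; exact hc'E hcE) (by rintro rfl; exact hcP hpP)
      (by rintro rfl; exact hc'P hpP)
      hU1 hU2 hU3
      ?_ (Or.inl hcE) (Or.inl hcE)
      (Or.inl hc'E') ?_ (Or.inr hc'E')
      (Or.inr hpD₀) (Or.inr hpD₀) ?_
    · rintro (h | h)
      · exact hcE' h
      · exact hcD₀ h
    · rintro (h | h)
      · exact hc'E h
      · exact hc'D₀ h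
    · rintro (h | h)
      · exact (Set.eq_empty_iff_forall_notMem.mp hEP p) ⟨h, hpP⟩
      · exact (Set.eq_empty_iff_forall_notMem.mp hE'P p) ⟨h, hpP⟩
  -- crossing vs old-open comparability
  have L2 : ∀ E ∈ 𝒞, E ∩ P = ∅ → (D₀ \ P) ⊆ E → ∀ D ∈ 𝒞, (D ∩ P).Nonempty →
      (D \ P).Nonempty → E ⊆ D \ P ∨ D \ P ⊆ E := by
    intro E hE hEP hME D hD hDP hDQ
    by_contra hnn
    push_neg at hnn
    obtain ⟨c, hcE, hcDP⟩ := Set.not_subset.mp hnn.1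
    obtain ⟨o, hoDP, hoE⟩ := Set.not_subset.mp hnn.2
    obtain ⟨p, hpD₀, hpP⟩ := hD₀P
    obtain ⟨m, hm⟩ := hD₀Q
    have hMD : D₀ \ P ⊆ D \ P := hmin D hD hDP hDQ
    have hcP : c ∉ P := fun h => (Set.eq_empty_iff_forall_notMem.mp hEP c) ⟨hcE, h⟩
    have hcD : c ∉ D := fun h => hcDP ⟨h, hcP⟩
    have hcM : c ∉ D₀ \ P := fun h => hcDP (hMD h)
    have hcD₀ : c ∉ D₀ := fun h => hcM ⟨h, hcP⟩
    have hoM : o ∉ D₀ \ P := fun h => hoE (hME h)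
    have hoD₀ : o ∉ D₀ := fun h => hoM ⟨h, hoDP.2⟩
    -- the component of o inside (D ∪ E) \ P
    set Z : Set W := ⋃₀ {G | G ∈ 𝒞 ∧ o ∈ G ∧ G ⊆ (D ∪ E) \ P} with hZ
    have hZ𝒞 : Z ∈ 𝒞 := h2 _ (fun G hG => hG.1) ⟨o, fun G hG => hG.2.1⟩
    have hoZ : o ∈ Z := by
      refine ⟨{o}, ⟨hA1 o (hsub D hD hoDP.1), rfl, ?_⟩, rfl⟩
      intro z hz
      rw [Set.mem_singleton_iff] at hz
      subst hz
      exact ⟨Or.inl hoDP.1, hoDP.2⟩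
    have hZsub : Z ⊆ (D ∪ E) \ P := Set.sUnion_subset fun G hG => hG.2.2
    by_cases hcZ : c ∈ Z
    · -- asteroidal triple (c, o, p)
      have hU1 : D ∪ D₀ ∈ 𝒞 := mem_union2 h2 hD hD₀ (hMD hm).1 hm.1
      have hU2 : E ∪ D₀ ∈ 𝒞 := mem_union2 h2 hE hD₀ (hME hm) hm.1
      refine noAT_elim hAT (a := c) (b := o) (c := p)
        (by rintro rfl; exact hcDP hoDP) (by rintro rfl; exact hcP hpP)
        (by rintro rfl; exact hoDP.2 hpP)
        hU1 hU2 hZ𝒞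
        ?_ (Or.inl hcE) hcZ
        (Or.inl hoDP.1) ?_ hoZ
        (Or.inr hpD₀) (Or.inr hpD₀) ?_
      · rintro (h | h)
        · exact hcD h
        · exact hcD₀ h
      · rintro (h | h)
        · exact hoE h
        · exact hoD₀ h
      · intro h
        exact (hZsub h).2 hpP
    · -- invariant contradiction via opens E ∪ D₀ and D ∪ Z
      have hEZ : ∀ t, t ∈ E → t ∉ Z := by
        intro t htE htZ
        apply hcZ
        have hEZ𝒞 : E ∪ Z ∈ 𝒞 := mem_union2 h2 hE hZ𝒞 htE htZ
        have hmem : E ∪ Z ∈ {G | G ∈ 𝒞 ∧ o ∈ G ∧ G ⊆ (D ∪ E) \ P} := by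
          refine ⟨hEZ𝒞, Or.inr hoZ, ?_⟩
          intro z hz
          rcases hz with hz | hz
          · exact ⟨Or.inr hz, fun hzP => (Set.eq_empty_iff_forall_notMem.mp hEP z) ⟨hz, hzP⟩⟩
          · exact hZsub hz
        exact ⟨E ∪ Z, hmem, Or.inl hcE⟩
      have hU2 : E ∪ D₀ ∈ 𝒞 := mem_union2 h2 hE hD₀ (hME hm) hm.1
      have hU4 : D ∪ Z ∈ 𝒞 := mem_union2 h2 hD hZ𝒞 hoDP.1 hoZ
      have hq1 : ((E ∪ D₀) ∩ P).Nonempty := ⟨p, Or.inr hpD₀, hpP⟩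
      have hq2 : ((E ∪ D₀) \ P) = E := by
        ext z
        simp only [Set.mem_diff, Set.mem_union]
        constructor
        · rintro ⟨hz | hz, hzP⟩
          · exact hz
          · exact hME ⟨hz, hzP⟩
        · intro hz
          exact ⟨Or.inl hz, fun hzP => (Set.eq_empty_iff_forall_notMem.mp hEP z) ⟨hz, hzP⟩⟩
      have hq3 : ((D ∪ Z) ∩ P).Nonempty := by
        obtain ⟨p', hp'⟩ := hDP
        exact ⟨p', Or.inl hp'.1, hp'.2⟩
      have hq4 : ((D ∪ Z) \ P) = (D \ P) ∪ Z := by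
        ext z
        simp only [Set.mem_diff, Set.mem_union]
        constructor
        · rintro ⟨hz | hz, hzP⟩
          · exact Or.inl ⟨hz, hzP⟩
          · exact Or.inr hz
        · rintro (hz | hz)
          · exact ⟨Or.inl hz.1, hz.2⟩
          · exact ⟨Or.inr hz, (hZsub hz).2⟩
      have hc1 := hInv (E ∪ D₀) hU2 (D ∪ Z) hU4 hq1 (by rw [hq2]; exact ⟨c, hcE⟩)
        hq3 (by rw [hq4]; exact ⟨o, Or.inr hoZ⟩)
      rw [hq2, hq4] at hc1
      rcases hc1 with h | h
      · rcases h hcE with h' | h'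
        · exact hcDP h'
        · exact hcZ h'
      · exact hoE (h (Or.inl hoDP))
  -- now verify the new invariant
  have hnewd : ∀ G : Set W, G ∩ P = ∅ → G \ P = G := by
    intro G hG
    ext z
    simp only [Set.mem_diff]
    exact ⟨fun h => h.1,
      fun h => ⟨h, fun hzP => (Set.eq_empty_iff_forall_notMem.mp hG z) ⟨h, hzP⟩⟩⟩
  have ed : ∀ G : Set W, G \ (P ∪ {x}) = (G \ P) \ {x} := fun G => (Set.diff_diff).symm
  refine ⟨x, ⟨hsub D₀ hD₀ hxM.1, hxM.2⟩, hxall, ?_⟩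
  intro E hE E' hE' h1 h2' h3 h4
  have hclass : ∀ G ∈ 𝒞, (G ∩ (P ∪ {x})).Nonempty → (G \ (P ∪ {x})).Nonempty →
      x ∈ G ∧ ((G ∩ P).Nonempty ∧ (G \ P).Nonempty ∨ G ∩ P = ∅) := by
    intro G hG hme hne
    by_cases hold : (G ∩ P).Nonempty
    · have hGne : (G \ P).Nonempty := by
        refine hne.mono ?_
        rw [ed]
        exact Set.diff_subset
      exact ⟨hxall G hG hold hGne, Or.inl ⟨hold, hGne⟩⟩
    · have hGP : G ∩ P = ∅ := Set.not_nonempty_iff_eq_empty.mp hold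
      have hxG : x ∈ G := by
        obtain ⟨z, hzG, hz⟩ := hme
        rcases hz with hz | hz
        · exact ((Set.eq_empty_iff_forall_notMem.mp hGP z) ⟨hzG, hz⟩).elim
        · rw [Set.mem_singleton_iff] at hz
          exact hz ▸ hzG
      exact ⟨hxG, Or.inr hGP⟩
  obtain ⟨hxE, hEc⟩ := hclass E hE h1 h2'
  obtain ⟨hxE', hE'c⟩ := hclass E' hE' h3 h4
  rw [ed E, ed E']
  have mono2 : ∀ {A B' : Set W}, A ⊆ B' → A \ {x} ⊆ B' \ {x} :=
    fun h => Set.diff_subset_diff_left h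
  rcases hEc with ⟨hEP, hEQ⟩ | hEP
  · rcases hE'c with ⟨hE'P, hE'Q⟩ | hE'P
    · rcases hInv E hE E' hE' hEP hEQ hE'P hE'Q with h | h
      · exact Or.inl (mono2 h)
      · exact Or.inr (mono2 h)
    · -- E old, E' new
      rw [hnewd E' hE'P]
      by_cases hE'M : E' ⊆ D₀ \ P
      · exact Or.inr (mono2 (hE'M.trans (hmin E hE hEP hEQ)))
      · have hME' : D₀ \ P ⊆ E' := hxcross E' hE' hxE' hE'P hE'M
        rcases L2 E' hE' hE'P hME' E hE hEP hEQ with h | h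
        · exact Or.inr (mono2 h)
        · exact Or.inl (mono2 h)
  · rcases hE'c with ⟨hE'P, hE'Q⟩ | hE'P
    · -- E new, E' old
      rw [hnewd E hEP]
      by_cases hEM : E ⊆ D₀ \ P
      · exact Or.inl (mono2 (hEM.trans (hmin E' hE' hE'P hE'Q)))
      · have hME : D₀ \ P ⊆ E := hxcross E hE hxE hEP hEM
        rcases L2 E hE hEP hME E' hE' hE'P hE'Q with h | h
        · exact Or.inl (mono2 h)
        · exact Or.inr (mono2 h)
    · -- both new
      rw [hnewd E hEP, hnewd E' hE'P]
      by_cases hEM : E ⊆ D₀ \ P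
      · by_cases hE'M : E' ⊆ D₀ \ P
        · rcases hxpure E hE E' hE' hxE hxE' hEM hE'M with h | h
          · exact Or.inl (mono2 h)
          · exact Or.inr (mono2 h)
        · have hME' : D₀ \ P ⊆ E' := hxcross E' hE' hxE' hE'P hE'M
          exact Or.inl (mono2 (hEM.trans hME'))
      · have hME : D₀ \ P ⊆ E := hxcross E hE hxE hEP hEM
        by_cases hE'M : E' ⊆ D₀ \ P
        · have : E' ⊆ E := hE'M.trans hME
          exact Or.inr (mono2 this)
        · have hME' : D₀ \ P ⊆ E' := hxcross E' hE' hxE' hE'P hE'M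
          rcases L3 E hE hEP hME E' hE' hE'P hME' with h | h
          · exact Or.inl (mono2 h)
          · exact Or.inr (mono2 h)

def Good (𝒞 : Set (Set W)) (P : Set W) (L : List W) : Prop :=
  ∀ C ∈ 𝒞, ∀ j : ℕ, ∀ hj : j < L.length,
    (∃ a ∈ C, a ∈ P ∨ ∃ i, ∃ hi : i < L.length, i < j ∧ L.get ⟨i, hi⟩ = a) →
    (∃ c ∈ C, ∃ k, ∃ hk : k < L.length, j < k ∧ L.get ⟨k, hk⟩ = c) →
    L.get ⟨j, hj⟩ ∈ C

lemma good_cons {𝒞 : Set (Set W)} {P : Set W} {x : W} {L : List W}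
    (hG : Good 𝒞 (P ∪ {x}) L)
    (hx : ∀ C ∈ 𝒞, (C ∩ P).Nonempty → (∃ c ∈ C, c ∈ L) → x ∈ C) :
    Good 𝒞 P (x :: L) := by
  intro C hC j hj hleft hright
  match j with
  | 0 =>
    have hxC : x ∈ C := by
      apply hx C hC
      · obtain ⟨a, haC, ha⟩ := hleft
        rcases ha with ha | ⟨i, hi, hlt, _⟩
        · exact ⟨a, haC, ha⟩
        · omega
      · obtain ⟨c, hcC, k, hk, hk0, hget⟩ := hright
        match k with
        | 0 => omega
        | k' + 1 =>
          refine ⟨c, hcC, ?_⟩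
          rw [List.get_cons_succ] at hget
          rw [← hget]
          exact List.get_mem _ _
    exact hxC
  | j' + 1 =>
    rw [List.get_cons_succ]
    have hj' : j' < L.length := by
      simpa using Nat.succ_lt_succ_iff.mp hj
    apply hG C hC j' hj'
    · obtain ⟨a, haC, ha⟩ := hleft
      refine ⟨a, haC, ?_⟩
      rcases ha with ha | ⟨i, hi, hlt, hget⟩
      · exact Or.inl (Or.inl ha)
      · match i with
        | 0 =>
          exact Or.inl (Or.inr hget.symm)
        | i' + 1 =>
          rw [List.get_cons_succ] at hget
          exact Or.inr ⟨i', by simpa using Nat.succ_lt_succ_iff.mp hi, by omega, hget⟩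
    · obtain ⟨c, hcC, k, hk, hkj, hget⟩ := hright
      match k with
      | 0 => omega
      | k' + 1 =>
        rw [List.get_cons_succ] at hget
        exact ⟨c, hcC, k', by simpa using Nat.succ_lt_succ_iff.mp hk, by omega, hget⟩

lemma build [DecidableEq W] (V : Finset W) (𝒞 : Set (Set W))
    (hsub : ∀ C ∈ 𝒞, C ⊆ (V : Set W)) (h2 : A2 𝒞) (hAT : NoAT 𝒞)
    (hA1 : ∀ v ∈ (V : Set W), ({v} : Set W) ∈ 𝒞) (hV𝒞 : (V : Set W) ∈ 𝒞) :
    ∀ n : ℕ, ∀ P : Finset W, P ⊆ V → P.Nonempty →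
      (∀ D ∈ 𝒞, ∀ D' ∈ 𝒞, (D ∩ (P : Set W)).Nonempty → (D \ (P : Set W)).Nonempty →
        (D' ∩ (P : Set W)).Nonempty → (D' \ (P : Set W)).Nonempty →
        D \ (P : Set W) ⊆ D' \ (P : Set W) ∨ D' \ (P : Set W) ⊆ D \ (P : Set W)) →
      (V \ P).card = n →
      ∃ L : List W, L.Nodup ∧ (∀ a, a ∈ L ↔ a ∈ V ∧ a ∉ P) ∧ Good 𝒞 (P : Set W) L := by
  intro n
  induction n with
  | zero =>
    intro P hPV hPne hInv hcard
    refine ⟨[], List.nodup_nil, ?_, ?_⟩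
    · intro a
      simp only [List.not_mem_nil, false_iff]
      rintro ⟨haV, haP⟩
      have : a ∈ V \ P := Finset.mem_sdiff.mpr ⟨haV, haP⟩
      rw [Finset.card_eq_zero.mp hcard] at this
      exact absurd this (Finset.notMem_empty a)
    · intro C hC j hj
      simp at hj
  | succ n ihn =>
    intro P hPV hPne hInv hcard
    have hQne : ((V : Set W) \ (P : Set W)).Nonempty := by
      have : (V \ P).Nonempty := Finset.card_pos.mp (by omega)
      obtain ⟨v, hv⟩ := this
      rw [Finset.mem_sdiff] at hv
      exact ⟨v, hv.1, hv.2⟩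
    obtain ⟨x, hxVP, hxall, hInv'⟩ := step V 𝒞 (P : Set W) hsub h2 hAT hA1 hV𝒞
      (by exact_mod_cast Finset.coe_subset.mpr hPV) (hPne.to_set) hQne hInv
    have hxV : x ∈ V := hxVP.1
    have hxP : x ∉ P := hxVP.2
    have hcard' : (V \ insert x P).card = n := by
      have h1 : V \ insert x P = (V \ P).erase x := by
        ext z
        simp only [Finset.mem_sdiff, Finset.mem_erase, Finset.mem_insert]
        tauto
      rw [h1, Finset.card_erase_of_mem (Finset.mem_sdiff.mpr ⟨hxV, hxP⟩)]
      omega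
    have hcoe : ((insert x P : Finset W) : Set W) = (P : Set W) ∪ {x} := by
      rw [Finset.coe_insert]
      ext z
      simp only [Set.mem_insert_iff, Set.mem_union, Set.mem_singleton_iff]
      tauto
    obtain ⟨L', hnd', hmem', hG'⟩ := ihn (insert x P) (Finset.insert_subset hxV hPV)
      ⟨x, Finset.mem_insert_self x P⟩ (by rw [hcoe]; exact hInv') hcard'
    refine ⟨x :: L', ?_, ?_, ?_⟩
    · refine List.nodup_cons.mpr ⟨?_, hnd'⟩
      intro hxL
      exact ((hmem' x).mp hxL).2 (Finset.mem_insert_self x P)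
    · intro a
      simp only [List.mem_cons, hmem' a, Finset.mem_insert]
      constructor
      · rintro (rfl | ⟨haV, haP⟩)
        · exact ⟨hxV, hxP⟩
        · exact ⟨haV, fun h => haP (Or.inr h)⟩
      · rintro ⟨haV, haP⟩
        by_cases hax : a = x
        · exact Or.inl hax
        · exact Or.inr ⟨haV, fun h => by rcases h with h | h; exact hax h; exact haP h⟩
    · apply good_cons
      · rw [hcoe] at hG'
        exact hG'
      · intro C hC h1 h2'
        obtain ⟨c, hcC, hcL⟩ := h2'
        have hc := (hmem' c).mp hcL
        have hcP : c ∉ (P : Set W) := fun h =>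
          hc.2 (Finset.mem_insert_of_mem (by exact_mod_cast h))
        exact hxall C hC h1 ⟨c, hcC, hcP⟩

lemma tconn [DecidableEq W] (V : Finset W) (𝒞 : Set (Set W))
    (hsub : ∀ C ∈ 𝒞, C ⊆ (V : Set W)) (h2 : A2 𝒞) (hAT : NoAT 𝒞)
    (hA1 : ∀ v ∈ (V : Set W), ({v} : Set W) ∈ 𝒞) (hV𝒞 : (V : Set W) ∈ 𝒞) :
    ∃ L : List W, L.Nodup ∧ (∀ a, a ∈ L ↔ a ∈ V) ∧ Good 𝒞 ∅ L := by
  rcases V.eq_empty_or_nonempty with rfl | hne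
  · refine ⟨[], List.nodup_nil, ?_, ?_⟩
    · intro a; simp
    · intro C hC j hj; simp at hj
  · obtain ⟨x₁, hx₁V, hx₁E⟩ := core V 𝒞 hsub h2 hAT hne
    have hInv1 : ∀ D ∈ 𝒞, ∀ D' ∈ 𝒞,
        (D ∩ (({x₁} : Finset W) : Set W)).Nonempty → (D \ (({x₁} : Finset W) : Set W)).Nonempty →
        (D' ∩ (({x₁} : Finset W) : Set W)).Nonempty → (D' \ (({x₁} : Finset W) : Set W)).Nonempty →
        D \ (({x₁} : Finset W) : Set W) ⊆ D' \ (({x₁} : Finset W) : Set W) ∨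
          D' \ (({x₁} : Finset W) : Set W) ⊆ D \ (({x₁} : Finset W) : Set W) := by
      intro D hD D' hD' h1 h2' h3 h4
      have hx₁D : x₁ ∈ D := by
        obtain ⟨z, hz1, hz2⟩ := h1
        simp only [Finset.coe_singleton, Set.mem_singleton_iff] at hz2
        exact hz2 ▸ hz1
      have hx₁D' : x₁ ∈ D' := by
        obtain ⟨z, hz1, hz2⟩ := h3
        simp only [Finset.coe_singleton, Set.mem_singleton_iff] at hz2
        exact hz2 ▸ hz1
      rcases hx₁E D hD D' hD' hx₁D hx₁D' with h | h
      · exact Or.inl (Set.diff_subset_diff_left h)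
      · exact Or.inr (Set.diff_subset_diff_left h)
    obtain ⟨L', hnd', hmem', hG'⟩ := build V 𝒞 hsub h2 hAT hA1 hV𝒞 ((V \ {x₁}).card)
      {x₁} (Finset.singleton_subset_iff.mpr hx₁V) ⟨x₁, Finset.mem_singleton_self x₁⟩ hInv1 rfl
    refine ⟨x₁ :: L', ?_, ?_, ?_⟩
    · refine List.nodup_cons.mpr ⟨?_, hnd'⟩
      intro hxL
      exact ((hmem' x₁).mp hxL).2 (Finset.mem_singleton_self x₁)
    · intro a
      simp only [List.mem_cons, hmem' a, Finset.mem_singleton]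
      constructor
      · rintro (rfl | ⟨haV, _⟩)
        · exact hx₁V
        · exact haV
      · intro haV
        by_cases hax : a = x₁
        · exact Or.inl hax
        · exact Or.inr ⟨haV, hax⟩
    · apply good_cons
      · have : (∅ : Set W) ∪ {x₁} = (({x₁} : Finset W) : Set W) := by simp
        rw [this]
        exact hG'
      · intro C hC h1 _
        obtain ⟨z, _, hz⟩ := h1
        exact absurd hz (Set.notMem_empty z)

lemma finite_main [DecidableEq W] (V : Finset W) (𝒞 : Set (Set W))
    (hsub : ∀ C ∈ 𝒞, C ⊆ (V : Set W)) (h2 : A2 𝒞) (hAT : NoAT 𝒞)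
    (hA1 : ∀ v ∈ (V : Set W), ({v} : Set W) ∈ 𝒞) :
    ∃ pos : W → ℕ, Set.InjOn pos (V : Set W) ∧
      ∀ C ∈ 𝒞, ∀ a ∈ (V : Set W), ∀ b ∈ (V : Set W), ∀ c ∈ (V : Set W),
        a ∈ C → c ∈ C → pos a ≤ pos b → pos b ≤ pos c → b ∈ C := by
  set 𝒞' : Set (Set W) := insert (V : Set W) 𝒞 with h𝒞'
  have hsub' : ∀ C ∈ 𝒞', C ⊆ (V : Set W) := by
    intro C hC
    rcases Set.mem_insert_iff.mp hC with rfl | hC'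
    · exact subset_rfl
    · exact hsub C hC'
  have h2' : A2 𝒞' := by
    intro 𝒮 hS hy
    by_cases hV : (V : Set W) ∈ 𝒮
    · have : ⋃₀ 𝒮 = (V : Set W) :=
        Set.Subset.antisymm (Set.sUnion_subset fun C hC => hsub' C (hS hC))
          (Set.subset_sUnion_of_mem hV)
      rw [this]
      exact Set.mem_insert _ _
    · refine Set.mem_insert_of_mem _ (h2 𝒮 ?_ hy)
      intro C hC
      rcases Set.mem_insert_iff.mp (hS hC) with rfl | hC'
      · exact absurd hC hV
      · exact hC'
  have hAT' : NoAT 𝒞' := by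
    rintro ⟨v₁, v₂, v₃, X₁, X₂, X₃, h12, h13, h23, m1, m2, m3, n1, a2, a3, b1, n2, b3,
      c1, c2, n3⟩
    have hv1 : v₁ ∈ (V : Set W) := hsub' X₂ m2 a2
    have hv2 : v₂ ∈ (V : Set W) := hsub' X₁ m1 b1
    have hv3 : v₃ ∈ (V : Set W) := hsub' X₁ m1 c1
    have m1' : X₁ ∈ 𝒞 := by
      rcases Set.mem_insert_iff.mp m1 with rfl | h
      · exact absurd hv1 n1
      · exact h
    have m2' : X₂ ∈ 𝒞 := by
      rcases Set.mem_insert_iff.mp m2 with rfl | h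
      · exact absurd hv2 n2
      · exact h
    have m3' : X₃ ∈ 𝒞 := by
      rcases Set.mem_insert_iff.mp m3 with rfl | h
      · exact absurd hv3 n3
      · exact h
    exact hAT ⟨v₁, v₂, v₃, X₁, X₂, X₃, h12, h13, h23, m1', m2', m3', n1, a2, a3, b1, n2, b3,
      c1, c2, n3⟩
  have hA1' : ∀ v ∈ (V : Set W), ({v} : Set W) ∈ 𝒞' :=
    fun v hv => Set.mem_insert_of_mem _ (hA1 v hv)
  have hV' : (V : Set W) ∈ 𝒞' := Set.mem_insert _ _
  obtain ⟨L, hnd, hmem, hGood⟩ := tconn V 𝒞' hsub' h2' hAT' hA1' hV'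
  refine ⟨fun a => L.idxOf a, ?_, ?_⟩
  · intro a ha b hb hab
    have haL : a ∈ L := (hmem a).mpr (by exact_mod_cast ha)
    have hbL : b ∈ L := (hmem b).mpr (by exact_mod_cast hb)
    exact (List.idxOf_inj haL).mp hab
  · intro C hC a ha b hb c hc haC hcC hle1 hle2
    have haL : a ∈ L := (hmem a).mpr (by exact_mod_cast ha)
    have hbL : b ∈ L := (hmem b).mpr (by exact_mod_cast hb)
    have hcL : c ∈ L := (hmem c).mpr (by exact_mod_cast hc)
    have hja : L.idxOf a < L.length := List.idxOf_lt_length_iff.mpr haL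
    have hjb : L.idxOf b < L.length := List.idxOf_lt_length_iff.mpr hbL
    have hjc : L.idxOf c < L.length := List.idxOf_lt_length_iff.mpr hcL
    by_cases hab : L.idxOf a = L.idxOf b
    · have : a = b := (List.idxOf_inj haL).mp hab
      exact this ▸ haC
    by_cases hbc : L.idxOf b = L.idxOf c
    · have : b = c := (List.idxOf_inj hbL).mp hbc
      exact this ▸ hcC
    have hle1' : L.idxOf a ≤ L.idxOf b := hle1
    have hle2' : L.idxOf b ≤ L.idxOf c := hle2
    have hgb : L.get ⟨L.idxOf b, hjb⟩ = b := List.idxOf_get hjb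
    have key := hGood C (Set.mem_insert_of_mem _ hC) (L.idxOf b) hjb
      ⟨a, haC, Or.inr ⟨L.idxOf a, hja, by omega, List.idxOf_get hja⟩⟩
      ⟨c, hcC, L.idxOf c, hjc, by omega, List.idxOf_get hjc⟩
    rwa [hgb] at key

/-! ### Instantiation with `F`-connectivity relative to a finite set -/

def FCI (F : Set (Set W)) (V : Set W) : Set (Set W) :=
  {X | X ⊆ V ∧ ∀ A B : Set W, A ∪ B = X → A ∩ B = ∅ → A.Nonempty → B.Nonempty →
    ∃ S ∈ F, S ∩ V ⊆ X ∧ (S ∩ A).Nonempty ∧ (S ∩ B).Nonempty}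

lemma fci_singleton {F : Set (Set W)} {V : Set W} {v : W} (hv : v ∈ V) :
    ({v} : Set W) ∈ FCI F V := by
  refine ⟨Set.singleton_subset_iff.mpr hv, ?_⟩
  intro A B hU hI hA hB
  exfalso
  obtain ⟨a, ha⟩ := hA
  obtain ⟨b, hb⟩ := hB
  have hav : a = v := by
    have : a ∈ ({v} : Set W) := hU ▸ (Or.inl ha : a ∈ A ∪ B)
    exact this
  have hbv : b = v := by
    have : b ∈ ({v} : Set W) := hU ▸ (Or.inr hb : b ∈ A ∪ B)
    exact this
  exact (Set.eq_empty_iff_forall_notMem.mp hI v) ⟨hav ▸ ha, hbv ▸ hb⟩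

lemma fci_A2 {F : Set (Set W)} {V : Set W} : A2 (FCI F V) := by
  rintro 𝒮 hS ⟨y, hy⟩
  refine ⟨Set.sUnion_subset fun X hX => (hS hX).1, ?_⟩
  intro A B hU hI hA hB
  by_cases hyA : y ∈ A
  · obtain ⟨b, hb⟩ := hB
    have hbU : b ∈ ⋃₀ 𝒮 := hU ▸ (Or.inr hb : b ∈ A ∪ B)
    obtain ⟨X, hX𝒮, hbX⟩ := hbU
    have hXsub : X ⊆ A ∪ B := by rw [hU]; exact fun z hz => ⟨X, hX𝒮, hz⟩
    have hU' : (A ∩ X) ∪ (B ∩ X) = X := by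
      ext z
      simp only [Set.mem_union, Set.mem_inter_iff]
      constructor
      · rintro (⟨h, h'⟩ | ⟨h, h'⟩) <;> exact h'
      · intro hz
        rcases hXsub hz with h | h
        · exact Or.inl ⟨h, hz⟩
        · exact Or.inr ⟨h, hz⟩
    have hI' : (A ∩ X) ∩ (B ∩ X) = ∅ := by
      apply Set.eq_empty_iff_forall_notMem.mpr
      intro z hz
      exact (Set.eq_empty_iff_forall_notMem.mp hI z) ⟨hz.1.1, hz.2.1⟩
    obtain ⟨S, hSF, hSV, h1, h2⟩ := (hS hX𝒮).2 (A ∩ X) (B ∩ X) hU' hI'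
      ⟨y, hyA, hy X hX𝒮⟩ ⟨b, hb, hbX⟩
    refine ⟨S, hSF, hSV.trans fun z hz => ⟨X, hX𝒮, hz⟩, ?_, ?_⟩
    · exact h1.mono fun z hz => ⟨hz.1, hz.2.1⟩
    · exact h2.mono fun z hz => ⟨hz.1, hz.2.1⟩
  · obtain ⟨a, ha⟩ := hA
    have haU : a ∈ ⋃₀ 𝒮 := hU ▸ (Or.inl ha : a ∈ A ∪ B)
    obtain ⟨X, hX𝒮, haX⟩ := haU
    have hyB : y ∈ B := by
      have : y ∈ A ∪ B := hU ▸ (⟨X, hX𝒮, hy X hX𝒮⟩ : y ∈ ⋃₀ 𝒮)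
      rcases this with h | h
      · exact absurd h hyA
      · exact h
    have hXsub : X ⊆ A ∪ B := by rw [hU]; exact fun z hz => ⟨X, hX𝒮, hz⟩
    have hU' : (A ∩ X) ∪ (B ∩ X) = X := by
      ext z
      simp only [Set.mem_union, Set.mem_inter_iff]
      constructor
      · rintro (⟨h, h'⟩ | ⟨h, h'⟩) <;> exact h'
      · intro hz
        rcases hXsub hz with h | h
        · exact Or.inl ⟨h, hz⟩
        · exact Or.inr ⟨h, hz⟩
    have hI' : (A ∩ X) ∩ (B ∩ X) = ∅ := by
      apply Set.eq_empty_iff_forall_notMem.mpr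
      intro z hz
      exact (Set.eq_empty_iff_forall_notMem.mp hI z) ⟨hz.1.1, hz.2.1⟩
    obtain ⟨S, hSF, hSV, h1, h2⟩ := (hS hX𝒮).2 (A ∩ X) (B ∩ X) hU' hI'
      ⟨a, ha, haX⟩ ⟨y, hyB, hy X hX𝒮⟩
    refine ⟨S, hSF, hSV.trans fun z hz => ⟨X, hX𝒮, hz⟩, ?_, ?_⟩
    · exact h1.mono fun z hz => ⟨hz.1, hz.2.1⟩
    · exact h2.mono fun z hz => ⟨hz.1, hz.2.1⟩

lemma fci_trace {F : Set (Set W)} {V : Set W} {S : Set W} (hS : S ∈ F) :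
    S ∩ V ∈ FCI F V := by
  refine ⟨Set.inter_subset_right, ?_⟩
  intro A B hU hI hA hB
  refine ⟨S, hS, ?_, ?_, ?_⟩
  · intro z hz; rw [← hU] at *; rw [hU]; exact hz
  · obtain ⟨a, ha⟩ := hA
    have : a ∈ S ∩ V := hU ▸ (Or.inl ha : a ∈ A ∪ B)
    exact ⟨a, this.1, ha⟩
  · obtain ⟨b, hb⟩ := hB
    have : b ∈ S ∩ V := hU ▸ (Or.inr hb : b ∈ A ∪ B)
    exact ⟨b, this.1, hb⟩

lemma fci_lift {F : Set (Set W)} {V X : Set W} (hX : X ∈ FCI F V) :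
    FConnected F (X ∪ ⋃₀ {S | S ∈ F ∧ (S ∩ V).Nonempty ∧ S ∩ V ⊆ X}) ∧
      (X ∪ ⋃₀ {S | S ∈ F ∧ (S ∩ V).Nonempty ∧ S ∩ V ⊆ X}) ∩ V = X := by
  set Y := ⋃₀ {S | S ∈ F ∧ (S ∩ V).Nonempty ∧ S ∩ V ⊆ X} with hY
  have htr : (X ∪ Y) ∩ V = X := by
    ext z
    simp only [Set.mem_inter_iff, Set.mem_union]
    constructor
    · rintro ⟨h | h, hzV⟩
      · exact h
      · obtain ⟨S, hS, hzS⟩ := h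
        exact hS.2.2 ⟨hzS, hzV⟩
    · intro hz
      exact ⟨Or.inl hz, hX.1 hz⟩
  refine ⟨?_, htr⟩
  intro A B hU hI hA hB
  by_cases hAX : (A ∩ X).Nonempty
  · by_cases hBX : (B ∩ X).Nonempty
    · have hU' : (A ∩ X) ∪ (B ∩ X) = X := by
        ext z
        simp only [Set.mem_union, Set.mem_inter_iff]
        constructor
        · rintro (⟨h, h'⟩ | ⟨h, h'⟩) <;> exact h'
        · intro hz
          have : z ∈ A ∪ B := hU ▸ (Or.inl hz : z ∈ X ∪ Y)
          rcases this with h | h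
          · exact Or.inl ⟨h, hz⟩
          · exact Or.inr ⟨h, hz⟩
      have hI' : (A ∩ X) ∩ (B ∩ X) = ∅ := by
        apply Set.eq_empty_iff_forall_notMem.mpr
        intro z hz
        exact (Set.eq_empty_iff_forall_notMem.mp hI z) ⟨hz.1.1, hz.2.1⟩
      obtain ⟨S, hSF, hSV, h1, h2⟩ := hX.2 (A ∩ X) (B ∩ X) hU' hI' hAX hBX
      have hSY : S ⊆ X ∪ Y := by
        intro z hz
        refine Or.inr ⟨S, ⟨hSF, ?_, hSV⟩, hz⟩
        obtain ⟨t, ht⟩ := h1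
        exact ⟨t, ht.1, hX.1 ht.2.2⟩
      refine ⟨S, hSF, hSY, ?_, ?_⟩
      · exact h1.mono fun z hz => ⟨hz.1, hz.2.1⟩
      · exact h2.mono fun z hz => ⟨hz.1, hz.2.1⟩
    · -- X ⊆ A
      have hXA : X ⊆ A := by
        intro z hz
        have : z ∈ A ∪ B := hU ▸ (Or.inl hz : z ∈ X ∪ Y)
        rcases this with h | h
        · exact h
        · exact absurd ⟨z, h, hz⟩ hBX
      obtain ⟨b, hb⟩ := hB
      have hbXY : b ∈ X ∪ Y := hU ▸ (Or.inr hb : b ∈ A ∪ B)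
      have hbY : b ∈ Y := by
        rcases hbXY with h | h
        · exact absurd ⟨b, hb, h⟩ hBX
        · exact h
      obtain ⟨S, ⟨hSF, hSVne, hSV⟩, hbS⟩ := hbY
      obtain ⟨t, ht⟩ := hSVne
      have htX : t ∈ X := hSV ht
      have hSY : S ⊆ X ∪ Y := fun z hz => Or.inr ⟨S, ⟨hSF, ⟨t, ht⟩, hSV⟩, hz⟩
      exact ⟨S, hSF, hSY, ⟨t, ht.1, hXA htX⟩, ⟨b, hbS, hb⟩⟩
  · -- X ⊆ B
    have hXB : X ⊆ B := by
      intro z hz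
      have : z ∈ A ∪ B := hU ▸ (Or.inl hz : z ∈ X ∪ Y)
      rcases this with h | h
      · exact absurd ⟨z, h, hz⟩ hAX
      · exact h
    obtain ⟨a, ha⟩ := hA
    have haXY : a ∈ X ∪ Y := hU ▸ (Or.inl ha : a ∈ A ∪ B)
    have haY : a ∈ Y := by
      rcases haXY with h | h
      · exact absurd ⟨a, ha, h⟩ hAX
      · exact h
    obtain ⟨S, ⟨hSF, hSVne, hSV⟩, haS⟩ := haY
    obtain ⟨t, ht⟩ := hSVne
    have htX : t ∈ X := hSV ht
    have hSY : S ⊆ X ∪ Y := fun z hz => Or.inr ⟨S, ⟨hSF, ⟨t, ht⟩, hSV⟩, hz⟩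
    exact ⟨S, hSF, hSY, ⟨a, haS, ha⟩, ⟨t, ht.1, hXB htX⟩⟩

def FreeOfAT (F : Set (Set W)) : Prop :=
  ¬ ∃ (v₁ v₂ v₃ : W) (X₁ X₂ X₃ : Set W),
    v₁ ≠ v₂ ∧ v₁ ≠ v₃ ∧ v₂ ≠ v₃ ∧
    FConnected F X₁ ∧ FConnected F X₂ ∧ FConnected F X₃ ∧
    v₁ ∉ X₁ ∧ v₁ ∈ X₂ ∧ v₁ ∈ X₃ ∧
    v₂ ∈ X₁ ∧ v₂ ∉ X₂ ∧ v₂ ∈ X₃ ∧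
    v₃ ∈ X₁ ∧ v₃ ∈ X₂ ∧ v₃ ∉ X₃

lemma fci_noAT {F : Set (Set W)} (V : Set W) (hno : FreeOfAT F) : NoAT (FCI F V) := by
  rintro ⟨v₁, v₂, v₃, X₁, X₂, X₃, h12, h13, h23, m1, m2, m3, n1, a2, a3, b1, n2, b3,
    c1, c2, n3⟩
  have hv1 : v₁ ∈ V := m2.1 a2
  have hv2 : v₂ ∈ V := m1.1 b1
  have hv3 : v₃ ∈ V := m1.1 c1
  obtain ⟨hc1, he1⟩ := fci_lift m1
  obtain ⟨hc2, he2⟩ := fci_lift m2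
  obtain ⟨hc3, he3⟩ := fci_lift m3
  have key : ∀ (X : Set W), X ⊆ V → ∀ X' : Set W, X' ∩ V = X → ∀ v, v ∈ V →
      (v ∈ X' ↔ v ∈ X) := by
    intro X hXV X' hX' v hv
    constructor
    · intro h
      rw [← hX']
      exact ⟨h, hv⟩
    · intro h
      rw [← hX'] at h
      exact h.1
  apply hno
  refine ⟨v₁, v₂, v₃,
    X₁ ∪ ⋃₀ {S | S ∈ F ∧ (S ∩ V).Nonempty ∧ S ∩ V ⊆ X₁},
    X₂ ∪ ⋃₀ {S | S ∈ F ∧ (S ∩ V).Nonempty ∧ S ∩ V ⊆ X₂},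
    X₃ ∪ ⋃₀ {S | S ∈ F ∧ (S ∩ V).Nonempty ∧ S ∩ V ⊆ X₃},
    h12, h13, h23, hc1, hc2, hc3, ?_, ?_, ?_, ?_, ?_, ?_, ?_, ?_, ?_⟩
  · exact fun h => n1 ((key X₁ m1.1 _ he1 v₁ hv1).mp h)
  · exact (key X₂ m2.1 _ he2 v₁ hv1).mpr a2
  · exact (key X₃ m3.1 _ he3 v₁ hv1).mpr a3
  · exact (key X₁ m1.1 _ he1 v₂ hv2).mpr b1
  · exact fun h => n2 ((key X₂ m2.1 _ he2 v₂ hv2).mp h)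
  · exact (key X₃ m3.1 _ he3 v₂ hv2).mpr b3
  · exact (key X₁ m1.1 _ he1 v₃ hv3).mpr c1
  · exact (key X₂ m2.1 _ he2 v₃ hv3).mpr c2
  · exact fun h => n3 ((key X₃ m3.1 _ he3 v₃ hv3).mp h)

lemma finitary (F : Set (Set W)) (hno : FreeOfAT F) (V₀ : Finset W) :
    ∃ pos : W → ℕ, Set.InjOn pos (V₀ : Set W) ∧
      ∀ S ∈ F, ∀ a ∈ (V₀ : Set W), ∀ b ∈ (V₀ : Set W), ∀ c ∈ (V₀ : Set W),
        a ∈ S → c ∈ S → pos a ≤ pos b → pos b ≤ pos c → b ∈ S := by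
  classical
  obtain ⟨pos, hinj, hint⟩ := finite_main V₀ (FCI F (V₀ : Set W))
    (fun C hC => hC.1) fci_A2 (fci_noAT _ hno) (fun v hv => fci_singleton hv)
  refine ⟨pos, hinj, ?_⟩
  intro S hS a ha b hb c hc haS hcS h1 h2
  have := hint (S ∩ (V₀ : Set W)) (fci_trace hS) a ha b hb c hc ⟨haS, ha⟩ ⟨hcS, hc⟩ h1 h2
  exact this.1

lemma backward (F : Set (Set W)) (hno : FreeOfAT F) :
    ∃ r : W → W → Prop, IsLinearOrder W r ∧
      ∀ S ∈ F, ∀ a b c : W, r a b → r b c → a ∈ S → c ∈ S → b ∈ S := by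
  classical
  choose pos hinj hint using fun V₀ : Finset W => finitary F hno V₀
  let U : Ultrafilter (Finset W) := Ultrafilter.of Filter.atTop
  have hUle : (U : Filter (Finset W)) ≤ Filter.atTop := Ultrafilter.of_le Filter.atTop
  have hU : ∀ s : Finset W, {V₀ : Finset W | s ⊆ V₀} ∈ U := by
    intro s
    exact hUle (Filter.mem_atTop s)
  set r : W → W → Prop :=
    fun a b => {V₀ : Finset W | a ∈ V₀ ∧ b ∈ V₀ ∧ pos V₀ a ≤ pos V₀ b} ∈ U with hr
  have hrefl : ∀ a, r a a := by
    intro a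
    apply Filter.mem_of_superset (hU {a})
    intro V₀ hV₀
    have : a ∈ V₀ := hV₀ (Finset.mem_singleton_self a)
    exact ⟨this, this, le_refl _⟩
  have htrans : ∀ a b c, r a b → r b c → r a c := by
    intro a b c h1 h2
    apply Filter.mem_of_superset (Filter.inter_mem h1 h2)
    rintro V₀ ⟨⟨ha, hb, hab⟩, ⟨_, hc, hbc⟩⟩
    exact ⟨ha, hc, le_trans hab hbc⟩
  have hanti : ∀ a b, r a b → r b a → a = b := by
    intro a b h1 h2
    obtain ⟨V₀, ⟨ha, hb, hab⟩, ⟨_, _, hba⟩⟩ := Filter.nonempty_of_mem (Filter.inter_mem h1 h2)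
    exact hinj V₀ (Finset.mem_coe.mpr ha) (Finset.mem_coe.mpr hb) (le_antisymm hab hba)
  have htotal : ∀ a b, r a b ∨ r b a := by
    intro a b
    have hT : {V₀ : Finset W | a ∈ V₀ ∧ b ∈ V₀} ∈ U := by
      apply Filter.mem_of_superset (hU {a, b})
      intro V₀ hV₀
      exact ⟨hV₀ (Finset.mem_insert_self a {b}),
        hV₀ (Finset.mem_insert_of_mem (Finset.mem_singleton_self b))⟩
    have hsub : {V₀ : Finset W | a ∈ V₀ ∧ b ∈ V₀} ⊆
        {V₀ : Finset W | a ∈ V₀ ∧ b ∈ V₀ ∧ pos V₀ a ≤ pos V₀ b} ∪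
        {V₀ : Finset W | b ∈ V₀ ∧ a ∈ V₀ ∧ pos V₀ b ≤ pos V₀ a} := by
      rintro V₀ ⟨ha, hb⟩
      rcases le_total (pos V₀ a) (pos V₀ b) with h | h
      · exact Or.inl ⟨ha, hb, h⟩
      · exact Or.inr ⟨hb, ha, h⟩
    have := Filter.mem_of_superset hT hsub
    rcases Ultrafilter.union_mem_iff.mp this with h | h
    · exact Or.inl h
    · exact Or.inr h
  refine ⟨r, ?_, ?_⟩
  · exact { refl := hrefl, trans := htrans, antisymm := hanti, total := htotal }
  · intro S hS a b c h1 h2 haS hcS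
    obtain ⟨V₀, ⟨ha, hb, hab⟩, ⟨_, hc, hbc⟩⟩ :=
      Filter.nonempty_of_mem (Filter.inter_mem h1 h2)
    exact hint V₀ S hS a (Finset.mem_coe.mpr ha) b (Finset.mem_coe.mpr hb)
      c (Finset.mem_coe.mpr hc) haS hcS hab hbc

lemma forward (F : Set (Set W)) (r : W → W → Prop) (hlin : IsLinearOrder W r)
    (hint : ∀ S ∈ F, ∀ a b c : W, r a b → r b c → a ∈ S → c ∈ S → b ∈ S) :
    FreeOfAT F := by
  haveI := hlin
  have htot : ∀ a b : W, r a b ∨ r b a := fun a b => Std.Total.total a b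
  have hanti : ∀ a b : W, r a b → r b a → a = b := fun a b h1 h2 => _root_.antisymm h1 h2
  rintro ⟨v₁, v₂, v₃, X₁, X₂, X₃, h12, h13, h23, hc1, hc2, hc3, n1, a2, a3, b1, n2, b3,
    c1, c2, n3⟩
  have aux : ∀ (v aa bb : W) (X : Set W), FConnected F X → v ∉ X → aa ∈ X → bb ∈ X →
      r aa v → aa ≠ v → r v bb → v ≠ bb → False := by
    intro v aa bb X hX hv haa hbb hr1 hne1 hr2 hne2
    have hU : {w | w ∈ X ∧ r w v ∧ w ≠ v} ∪ {w | w ∈ X ∧ ¬(r w v ∧ w ≠ v)} = X := by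
      ext z
      simp only [Set.mem_union, Set.mem_setOf_eq]
      constructor
      · rintro (⟨h, _⟩ | ⟨h, _⟩) <;> exact h
      · intro hz
        by_cases h : r z v ∧ z ≠ v
        · exact Or.inl ⟨hz, h⟩
        · exact Or.inr ⟨hz, h⟩
    have hI : {w | w ∈ X ∧ r w v ∧ w ≠ v} ∩ {w | w ∈ X ∧ ¬(r w v ∧ w ≠ v)} = ∅ := by
      apply Set.eq_empty_iff_forall_notMem.mpr
      intro z hz
      exact hz.2.2 hz.1.2
    obtain ⟨S, hSF, hSX, hSA, hSB⟩ := hX _ _ hU hI ⟨aa, haa, hr1, hne1⟩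
      ⟨bb, hbb, fun h => h.2 (hanti bb v h.1 hr2)⟩
    obtain ⟨s₁, hs₁S, hs₁X, hs₁r, hs₁ne⟩ := hSA
    obtain ⟨s₂, hs₂S, hs₂X, hs₂n⟩ := hSB
    have hs₂v : s₂ ≠ v := by rintro rfl; exact hv hs₂X
    have hvs₂ : r v s₂ := by
      rcases htot s₂ v with h | h
      · exact absurd ⟨h, hs₂v⟩ hs₂n
      · exact h
    exact hv (hSX (hint S hSF s₁ v s₂ hs₁r hvs₂ hs₁S hs₂S))
  rcases htot v₁ v₂ with t12 | t21
  · rcases htot v₂ v₃ with t23 | t32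
    · exact aux v₂ v₁ v₃ X₂ hc2 n2 a2 c2 t12 h12 t23 h23
    · rcases htot v₁ v₃ with t13 | t31
      · exact aux v₃ v₁ v₂ X₃ hc3 n3 a3 b3 t13 h13 t32 (Ne.symm h23)
      · exact aux v₁ v₃ v₂ X₁ hc1 n1 c1 b1 t31 (Ne.symm h13) t12 h12
  · rcases htot v₂ v₃ with t23 | t32
    · rcases htot v₁ v₃ with t13 | t31
      · exact aux v₁ v₂ v₃ X₁ hc1 n1 b1 c1 t21 (Ne.symm h12) t13 h13
      · exact aux v₃ v₂ v₁ X₃ hc3 n3 b3 a3 t23 h23 t31 (Ne.symm h13)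
    · exact aux v₂ v₃ v₁ X₂ hc2 n2 c2 a2 t32 (Ne.symm h23) t21 (Ne.symm h12)

end S12

/-- Infinite Tucker theorem: there is a linear order on `W` making every member of `F`
an interval iff there is no "asteroidal" triple of vertices and `F`-connected sets. -/
theorem stmt12 {W : Type u} (F : Set (Set W)) :
    (∃ r : W → W → Prop, IsLinearOrder W r ∧
        ∀ S ∈ F, ∀ a b c : W, r a b → r b c → a ∈ S → c ∈ S → b ∈ S) ↔
      ¬ ∃ (v₁ v₂ v₃ : W) (X₁ X₂ X₃ : Set W),
        v₁ ≠ v₂ ∧ v₁ ≠ v₃ ∧ v₂ ≠ v₃ ∧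
        FConnected F X₁ ∧ FConnected F X₂ ∧ FConnected F X₃ ∧
        v₁ ∉ X₁ ∧ v₁ ∈ X₂ ∧ v₁ ∈ X₃ ∧
        v₂ ∈ X₁ ∧ v₂ ∉ X₂ ∧ v₂ ∈ X₃ ∧
        v₃ ∈ X₁ ∧ v₃ ∈ X₂ ∧ v₃ ∉ X₃ := by
  constructor
  · rintro ⟨r, hlin, hint⟩
    exact S12.forward F r hlin hint
  · intro hno
    obtain ⟨r, hlin, hint⟩ := S12.backward F hno
    exact ⟨r, hlin, hint⟩
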